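/- A continuous map p : E → B has the weakly unique path homotopically lifting property (wuphl) if and only if for every point e ∈ E the induced homomorphism p₊ : π₁(E, e) → π₁(B, p(e)) on fundamental groups is injective. -/

import Mathlib

universe u

open scoped unitInterval

/-- `p` has the weakly unique path homotopically lifting property (wuphl). -/
def Wuphl {E B : Type*} [TopologicalSpace E] [TopologicalSpace B] (p : C(E, B)) : Prop :=
  ∀ α β : C(unitInterval, E), α 0 = β 0 → α 1 = β 1 →
    (p.comp α).HomotopicRel (p.comp β) {0, 1} →
    α.HomotopicRel β {0, 1}

/-- The homomorphism induced by a continuous map `p` on fundamental groups. -/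
noncomputable def inducedPi1Hom {E B : Type u} [TopologicalSpace E] [TopologicalSpace B]
    (p : C(E, B)) (e : E) :
    FundamentalGroup E e →* FundamentalGroup B (p e) :=
  CategoryTheory.Functor.mapEnd _
    (FundamentalGroupoid.fundamentalGroupoidFunctor.map
      (X := TopCat.of E) (Y := TopCat.of B) (TopCat.ofHom p))

open CategoryTheory

attribute [local instance] Path.Homotopic.setoid

lemma path_map_toCM {X Y : Type u} [TopologicalSpace X] [TopologicalSpace Y] {x y : X}
    (A : Path x y) (p : C(X, Y)) :
    (A.map p.continuous).toContinuousMap = p.comp A.toContinuousMap := by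
  ext t; rfl

lemma path_homotopic_iff {X : Type u} [TopologicalSpace X] {x y : X}
    (A B : Path x y) : A.Homotopic B ↔
      A.toContinuousMap.HomotopicRel B.toContinuousMap {0, 1} :=
  Iff.rfl

theorem wuphl_iff_pi1_injective {E B : Type u} [TopologicalSpace E] [TopologicalSpace B]
    (p : C(E, B)) :
    Wuphl p ↔ ∀ e : E, Function.Injective (inducedPi1Hom p e) := by
  set F := FundamentalGroupoid.fundamentalGroupoidFunctor.map
      (X := TopCat.of E) (Y := TopCat.of B) (TopCat.ofHom p) with hFdef
  constructor
  · intro hw e a b hab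
    have hmap : F.map a = F.map b := hab
    obtain ⟨γ, hγ⟩ := Quotient.exists_rep
      (a : Path.Homotopic.Quotient e e)
    obtain ⟨δ, hδ⟩ := Quotient.exists_rep
      (b : Path.Homotopic.Quotient e e)
    rw [← hγ, ← hδ] at hmap
    have h2 : (γ.map p.continuous).Homotopic (δ.map p.continuous) :=
      Quotient.exact hmap
    have h3 : (p.comp γ.toContinuousMap).HomotopicRel (p.comp δ.toContinuousMap) {0, 1} := by
      rw [← path_map_toCM, ← path_map_toCM]
      exact h2
    have h4 := hw γ.toContinuousMap δ.toContinuousMap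
      (γ.source.trans δ.source.symm) (γ.target.trans δ.target.symm) h3
    have h5 : γ.Homotopic δ := h4
    show a = b
    rw [← hγ, ← hδ]
    exact Quotient.sound h5
  · intro hinj α β h0 h1 hp
    let A : Path (α 0) (α 1) := ⟨α, rfl, rfl⟩
    let Bp : Path (α 0) (α 1) := ⟨β, h0.symm, h1.symm⟩
    have hABp : (A.map p.continuous).Homotopic (Bp.map p.continuous) := by
      rw [path_homotopic_iff, path_map_toCM, path_map_toCM]
      exact hp
    have hF : F.map (⟦A⟧ : FundamentalGroupoid.mk (α 0) ⟶ FundamentalGroupoid.mk (α 1))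
        = F.map ⟦Bp⟧ := Quotient.sound hABp
    set f : FundamentalGroupoid.mk (α 0) ⟶ FundamentalGroupoid.mk (α 1) := ⟦A⟧ with hf
    set g : FundamentalGroupoid.mk (α 0) ⟶ FundamentalGroupoid.mk (α 1) := ⟦Bp⟧ with hg
    have h1' : inducedPi1Hom p (α 0) (FundamentalGroup.fromArrow (X := TopCat.of E) (x := α 0) (f ≫ Groupoid.inv g)) = 1 := by
      show F.map (f ≫ Groupoid.inv g) = 𝟙 _
      erw [F.map_comp, Groupoid.inv_eq_inv, F.map_inv, hF, IsIso.hom_inv_id]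
    have h2 := hinj (α 0) (h1'.trans (map_one _).symm)
    have h3 : f ≫ Groupoid.inv g = 𝟙 _ := h2
    rw [Groupoid.inv_eq_inv] at h3
    have key : f = g := by
      have h4 := congrArg (fun h => h ≫ g) h3
      simpa using h4
    have h5 : A.Homotopic Bp := Quotient.exact key
    exact h5
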